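/- arXiv:1605.01068 — 4 statements merged into one kernel-verified Lean document; each statement's English description precedes it below -/
import Mathlib

section
/- Let d ≥ 2 and let f_d(n) denote the number of permutations π ∈ S_n all of whose cycle lengths are divisible by d. Then for n ≥ d, f_d(n) = (n-1)(n-2)⋯(n-d+2)·(n-d+1)²·f_d(n-d). -/
/-- `fd d n` is the number of permutations of `n` points all of whose cycle
lengths (including fixed points, which are cycles of length 1) are divisible
by `d`.  The cycle length of the cycle containing `x` is the minimal period
of `x` under the permutation. -/
noncomputable def fd (d n : ℕ) : ℕ :=
  Nat.card {π : Equiv.Perm (Fin n) // ∀ x, d ∣ Function.minimalPeriod (⇑π) x}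

open Equiv Equiv.Perm Function

namespace FdAux

variable {n : ℕ}

lemma mem_pp {α : Type*} [Finite α] (π : Equiv.Perm α) (x : α) : x ∈ periodicPts ⇑π := by
  refine ⟨orderOf π, orderOf_pos π, ?_⟩
  show π^[orderOf π] x = x
  rw [← Equiv.Perm.coe_pow, pow_orderOf_eq_one]
  rfl

lemma mp_pos {α : Type*} [Finite α] (π : Equiv.Perm α) (x : α) :
    0 < Function.minimalPeriod ⇑π x :=
  minimalPeriod_pos_of_mem_periodicPts (mem_pp π x)

lemma mp_eq_of_sameCycle {α : Type*} [Finite α] {π : Equiv.Perm α} {x y : α}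
    (h : π.SameCycle x y) :
    Function.minimalPeriod ⇑π y = Function.minimalPeriod ⇑π x := by
  obtain ⟨i, -, rfl⟩ := h.exists_pow_eq'
  rw [Equiv.Perm.coe_pow]
  exact minimalPeriod_apply_iterate (mem_pp π x) i

/-- The key predicate: the cycle of `a` has length `≡ r (mod d)` and all
other cycles have length divisible by `d`. -/
def QQ (d : ℕ) {α : Type*} (r : ZMod d) (a : α) (π : Equiv.Perm α) : Prop :=
  ((Function.minimalPeriod ⇑π a : ZMod d) = r) ∧
    ∀ x, ¬ π.SameCycle a x → d ∣ Function.minimalPeriod ⇑π x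

noncomputable def hh (d n : ℕ) (r : ZMod d) : ℕ :=
  Nat.card {π : Equiv.Perm (Fin (n + 1)) // QQ d r 0 π}

lemma card_QQ_conj {α : Type*} [Finite α] (d : ℕ) (r : ZMod d) (σ : Equiv.Perm α) (a : α) :
    Nat.card {π : Equiv.Perm α // QQ d r a π} =
      Nat.card {π : Equiv.Perm α // QQ d r (σ a) π} := by
  apply Nat.card_congr
  refine Equiv.subtypeEquiv (MulAut.conj σ).toEquiv ?_
  intro π
  have hmp : ∀ x : α, Function.minimalPeriod ⇑(σ * π * σ⁻¹) (σ x) =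
      Function.minimalPeriod ⇑π x := by
    intro x
    rw [minimalPeriod_eq_minimalPeriod_iff]
    intro k
    show (⇑(σ * π * σ⁻¹))^[k] (σ x) = σ x ↔ π^[k] x = x
    rw [← Equiv.Perm.coe_pow, ← Equiv.Perm.coe_pow, conj_pow]
    simp [Equiv.Perm.mul_apply]
  have hsc : ∀ x y : α, (σ * π * σ⁻¹).SameCycle (σ x) (σ y) ↔ π.SameCycle x y := by
    intro x y
    rw [Equiv.Perm.sameCycle_conj]
    simp
  show QQ d r a π ↔ QQ d r (σ a) (σ * π * σ⁻¹)
  unfold QQ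
  constructor
  · rintro ⟨h1, h2⟩
    refine ⟨by rw [hmp a]; exact h1, ?_⟩
    intro y hy
    obtain ⟨x, rfl⟩ : ∃ x, y = σ x := ⟨σ.symm y, (σ.apply_symm_apply y).symm⟩
    rw [hmp]
    exact h2 x (fun hc => hy ((hsc a x).2 hc))
  · rintro ⟨h1, h2⟩
    refine ⟨by rw [hmp a] at h1; exact h1, ?_⟩
    intro x hx
    have := h2 (σ x) (fun hc => hx ((hsc a x).1 hc))
    rwa [hmp] at this

lemma symm_zero_apply_succ (e : Equiv.Perm (Fin n)) (x : Fin n) :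
    Equiv.Perm.decomposeFin.symm ((0 : Fin (n+1)), e) x.succ = (e x).succ := by
  rw [Equiv.Perm.decomposeFin_symm_apply_succ]
  simp

lemma symm_succ_apply_succ (e : Equiv.Perm (Fin n)) (q x : Fin n) :
    Equiv.Perm.decomposeFin.symm (q.succ, e) x.succ =
      if e x = q then 0 else (e x).succ := by
  rw [Equiv.Perm.decomposeFin_symm_apply_succ]
  by_cases h : e x = q
  · rw [if_pos h, h, Equiv.swap_apply_right]
  · rw [if_neg h, Equiv.swap_apply_of_ne_of_ne (Fin.succ_ne_zero _)
      (by simpa [Fin.succ_inj] using h)]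

lemma traj (e : Equiv.Perm (Fin n)) (q : Fin n) :
    ∀ j, j < Function.minimalPeriod ⇑e q →
      (⇑(Equiv.Perm.decomposeFin.symm (q.succ, e)))^[j+1] 0 = ((⇑e)^[j] q).succ := by
  intro j
  induction j with
  | zero =>
    intro _
    simpa using Equiv.Perm.decomposeFin_symm_apply_zero q.succ e
  | succ j ih =>
    intro hj
    rw [Function.iterate_succ_apply', ih (by omega), symm_succ_apply_succ, if_neg,
      ← Function.iterate_succ_apply' (⇑e) j q]
    intro hc
    have hp : Function.IsPeriodicPt ⇑e (j+1) q := by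
      show (⇑e)^[j+1] q = q
      rw [Function.iterate_succ_apply']
      exact hc
    have := hp.minimalPeriod_le (by omega)
    omega

lemma orbit_zero (e : Equiv.Perm (Fin n)) (q : Fin n) :
    ∀ k, (⇑(Equiv.Perm.decomposeFin.symm (q.succ, e)))^[k] 0 = 0 ∨
      ∃ j, (⇑(Equiv.Perm.decomposeFin.symm (q.succ, e)))^[k] 0 = ((⇑e)^[j] q).succ := by
  intro k
  induction k with
  | zero => left; rfl
  | succ k ih =>
    rw [Function.iterate_succ_apply']
    rcases ih with h | ⟨j, h⟩
    · right
      exact ⟨0, by rw [h]; simpa using Equiv.Perm.decomposeFin_symm_apply_zero q.succ e⟩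
    · rw [h, symm_succ_apply_succ]
      by_cases hc : e ((⇑e)^[j] q) = q
      · left; rw [if_pos hc]
      · right
        exact ⟨j+1, by rw [if_neg hc, Function.iterate_succ_apply']⟩

lemma mp_zero (e : Equiv.Perm (Fin n)) (q : Fin n) :
    Function.minimalPeriod ⇑(Equiv.Perm.decomposeFin.symm (q.succ, e)) 0 =
      Function.minimalPeriod ⇑e q + 1 := by
  set π := Equiv.Perm.decomposeFin.symm (q.succ, e) with hπ
  set m := Function.minimalPeriod ⇑e q with hm
  have hm0 : 0 < m := mp_pos e q
  have hper : Function.IsPeriodicPt ⇑π (m+1) 0 := by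
    show (⇑π)^[m+1] 0 = 0
    have h1 := traj e q (m-1) (by omega)
    have hq : e ((⇑e)^[m-1] q) = q := by
      calc e ((⇑e)^[m-1] q) = (⇑e)^[m-1+1] q :=
            (Function.iterate_succ_apply' (⇑e) (m-1) q).symm
        _ = q := by rw [show m-1+1 = m by omega]; exact Function.iterate_minimalPeriod
    rw [show m + 1 = (m-1+1)+1 by omega, Function.iterate_succ_apply', h1,
      symm_succ_apply_succ, if_pos hq]
  have hle : Function.minimalPeriod ⇑π 0 ≤ m + 1 := hper.minimalPeriod_le (by omega)
  have hgt : ¬ Function.minimalPeriod ⇑π 0 ≤ m := by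
    intro hle'
    have h1 : 0 < Function.minimalPeriod ⇑π 0 := mp_pos _ _
    have h2 := traj e q (Function.minimalPeriod ⇑π 0 - 1) (by omega)
    rw [show Function.minimalPeriod ⇑π 0 - 1 + 1 = Function.minimalPeriod ⇑π 0 by omega,
      Function.iterate_minimalPeriod] at h2
    exact (Fin.succ_ne_zero _) h2.symm
  omega

lemma sameCycle_zero_succ (e : Equiv.Perm (Fin n)) (q x : Fin n) :
    (Equiv.Perm.decomposeFin.symm (q.succ, e)).SameCycle 0 x.succ ↔ e.SameCycle q x := by
  constructor
  · intro h
    obtain ⟨i, -, hi⟩ := h.exists_pow_eq'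
    have hi' : (⇑(Equiv.Perm.decomposeFin.symm (q.succ, e)))^[i] 0 = x.succ := hi
    rcases orbit_zero e q i with h0 | ⟨j, hj⟩
    · rw [h0] at hi'
      exact absurd hi'.symm (Fin.succ_ne_zero x)
    · rw [hj] at hi'
      have hx : (⇑e)^[j] q = x := Fin.succ_injective _ hi'
      exact ⟨(j : ℤ), by rw [zpow_natCast, Equiv.Perm.coe_pow]; exact hx⟩
  · intro h
    obtain ⟨i, -, hi⟩ := h.exists_pow_eq'
    set m := Function.minimalPeriod ⇑e q with hm
    have hm0 : 0 < m := mp_pos e q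
    have h2 : (⇑e)^[i % m] q = x := by
      rw [Function.iterate_mod_minimalPeriod_eq]
      exact hi
    have h3 := traj e q (i % m) (Nat.mod_lt _ hm0)
    exact ⟨((i % m : ℕ) + 1 : ℕ), by
      rw [zpow_natCast, Equiv.Perm.coe_pow]
      rw [h3, h2]⟩

lemma traj_other (e : Equiv.Perm (Fin n)) (q : Fin n) {x : Fin n} (hx : ¬ e.SameCycle q x) :
    ∀ k, (⇑(Equiv.Perm.decomposeFin.symm (q.succ, e)))^[k] x.succ = ((⇑e)^[k] x).succ := by
  intro k
  induction k with
  | zero => rfl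
  | succ k ih =>
    rw [Function.iterate_succ_apply', ih, symm_succ_apply_succ, if_neg,
      ← Function.iterate_succ_apply' (⇑e) k x]
    intro hc
    refine hx (Equiv.Perm.SameCycle.symm ⟨(k+1 : ℕ), ?_⟩)
    rw [zpow_natCast, Equiv.Perm.coe_pow]
    rw [Function.iterate_succ_apply']
    exact hc

lemma mp_succ_other (e : Equiv.Perm (Fin n)) (q : Fin n) {x : Fin n}
    (hx : ¬ e.SameCycle q x) :
    Function.minimalPeriod ⇑(Equiv.Perm.decomposeFin.symm (q.succ, e)) x.succ =
      Function.minimalPeriod ⇑e x := by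
  rw [minimalPeriod_eq_minimalPeriod_iff]
  intro k
  show (⇑(Equiv.Perm.decomposeFin.symm (q.succ, e)))^[k] x.succ = x.succ ↔ (⇑e)^[k] x = x
  rw [traj_other e q hx k, Fin.succ_inj]

lemma traj0 (e : Equiv.Perm (Fin n)) (x : Fin n) :
    ∀ k, (⇑(Equiv.Perm.decomposeFin.symm ((0 : Fin (n+1)), e)))^[k] x.succ
      = ((⇑e)^[k] x).succ := by
  intro k
  induction k with
  | zero => rfl
  | succ k ih =>
    rw [Function.iterate_succ_apply', ih, symm_zero_apply_succ,
      ← Function.iterate_succ_apply' (⇑e) k x]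

lemma mp0_succ (e : Equiv.Perm (Fin n)) (x : Fin n) :
    Function.minimalPeriod ⇑(Equiv.Perm.decomposeFin.symm ((0 : Fin (n+1)), e)) x.succ =
      Function.minimalPeriod ⇑e x := by
  rw [minimalPeriod_eq_minimalPeriod_iff]
  intro k
  show (⇑(Equiv.Perm.decomposeFin.symm ((0 : Fin (n+1)), e)))^[k] x.succ = x.succ ↔
    (⇑e)^[k] x = x
  rw [traj0 e x k, Fin.succ_inj]

lemma mp0_zero (e : Equiv.Perm (Fin n)) :
    Function.minimalPeriod ⇑(Equiv.Perm.decomposeFin.symm ((0 : Fin (n+1)), e)) 0 = 1 := by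
  rw [Function.minimalPeriod_eq_one_iff_isFixedPt]
  show Equiv.Perm.decomposeFin.symm ((0 : Fin (n+1)), e) 0 = 0
  simp

lemma sameCycle0 (e : Equiv.Perm (Fin n)) (y : Fin (n+1)) :
    (Equiv.Perm.decomposeFin.symm ((0 : Fin (n+1)), e)).SameCycle 0 y ↔ y = 0 := by
  constructor
  · intro h
    obtain ⟨i, -, hi⟩ := h.exists_pow_eq'
    have hfix : Function.IsFixedPt ⇑(Equiv.Perm.decomposeFin.symm ((0 : Fin (n+1)), e)) 0 := by
      show Equiv.Perm.decomposeFin.symm ((0 : Fin (n+1)), e) 0 = 0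
      simp
    have : (⇑(Equiv.Perm.decomposeFin.symm ((0 : Fin (n+1)), e)))^[i] 0 = 0 := hfix.iterate i
    rw [show ((Equiv.Perm.decomposeFin.symm ((0 : Fin (n+1)), e)) ^ i) 0 =
      (⇑(Equiv.Perm.decomposeFin.symm ((0 : Fin (n+1)), e)))^[i] 0 from rfl, this] at hi
    exact hi.symm
  · rintro rfl
    exact Equiv.Perm.SameCycle.refl _ _

lemma QQ_symm_zero (d : ℕ) (r : ZMod d) (e : Equiv.Perm (Fin n)) :
    QQ d r (0 : Fin (n+1)) (Equiv.Perm.decomposeFin.symm (0, e)) ↔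
      (r = 1 ∧ ∀ x, d ∣ Function.minimalPeriod ⇑e x) := by
  unfold QQ
  rw [mp0_zero]
  constructor
  · rintro ⟨h1, h2⟩
    refine ⟨by simpa using h1.symm, fun x => ?_⟩
    have := h2 x.succ (by rw [sameCycle0]; exact Fin.succ_ne_zero x)
    rwa [mp0_succ] at this
  · rintro ⟨h1, h2⟩
    refine ⟨by simp [h1], ?_⟩
    intro y hy
    induction y using Fin.cases with
    | zero => exact absurd (Equiv.Perm.SameCycle.refl _ _) hy
    | succ x =>
      rw [mp0_succ]
      exact h2 x

lemma QQ_symm_succ (d : ℕ) (r : ZMod d) (e : Equiv.Perm (Fin n)) (q : Fin n) :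
    QQ d r (0 : Fin (n+1)) (Equiv.Perm.decomposeFin.symm (q.succ, e)) ↔
      QQ d (r - 1) q e := by
  unfold QQ
  rw [mp_zero]
  constructor
  · rintro ⟨h1, h2⟩
    refine ⟨?_, fun x hx => ?_⟩
    · rw [Nat.cast_add, Nat.cast_one] at h1
      exact eq_sub_of_add_eq h1
    · have := h2 x.succ (by rw [sameCycle_zero_succ]; exact hx)
      rwa [mp_succ_other e q hx] at this
  · rintro ⟨h1, h2⟩
    refine ⟨by rw [Nat.cast_add, Nat.cast_one, h1]; ring, ?_⟩
    intro y hy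
    induction y using Fin.cases with
    | zero => exact absurd (Equiv.Perm.SameCycle.refl _ _) hy
    | succ x =>
      rw [sameCycle_zero_succ] at hy
      rw [mp_succ_other e q hy]
      exact h2 x hy

lemma card_subtype_perm_succ (n : ℕ) (R : Equiv.Perm (Fin (n+1)) → Prop) :
    Nat.card {π : Equiv.Perm (Fin (n+1)) // R π} =
      Nat.card {e : Equiv.Perm (Fin n) // R (Equiv.Perm.decomposeFin.symm (0, e))} +
      ∑ q : Fin n,
        Nat.card {e : Equiv.Perm (Fin n) // R (Equiv.Perm.decomposeFin.symm (q.succ, e))} := by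
  classical
  have e1 : {π : Equiv.Perm (Fin (n+1)) // R π} ≃
      Σ p : Fin (n+1), {e : Equiv.Perm (Fin n) // R (Equiv.Perm.decomposeFin.symm (p, e))} :=
    (Equiv.subtypeEquiv Equiv.Perm.decomposeFin (fun π => by
      constructor
      · intro h
        simpa using h
      · intro h
        simpa using h)).trans
      (Equiv.subtypeProdEquivSigmaSubtype
        (fun p e => R (Equiv.Perm.decomposeFin.symm (p, e))))
  rw [Nat.card_congr e1]
  letI : ∀ p : Fin (n+1), Fintype {e : Equiv.Perm (Fin n) //
      R (Equiv.Perm.decomposeFin.symm (p, e))} := fun p => Fintype.ofFinite _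
  rw [Nat.card_eq_fintype_card, Fintype.card_sigma, Fin.sum_univ_succ]
  simp only [← Nat.card_eq_fintype_card]

lemma fd_zero (d : ℕ) : fd d 0 = 1 := by
  rw [fd, Nat.card_eq_one_iff_exists]
  exact ⟨⟨1, fun x => x.elim0⟩, fun y => Subtype.ext (Subsingleton.elim _ _)⟩

lemma fd_succ (d : ℕ) (hd : 2 ≤ d) (m : ℕ) : fd d (m+1) = hh d m 0 := by
  rw [fd, hh]
  apply Nat.card_congr (Equiv.subtypeEquiv (Equiv.refl _) ?_)
  intro π
  simp only [Equiv.refl_apply]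
  unfold QQ
  constructor
  · intro h
    exact ⟨by rw [ZMod.natCast_eq_zero_iff]; exact h 0, fun x _ => h x⟩
  · rintro ⟨h1, h2⟩ x
    by_cases hx : π.SameCycle 0 x
    · rw [mp_eq_of_sameCycle hx]
      exact (ZMod.natCast_eq_zero_iff _ _).1 h1
    · exact h2 x hx

lemma hh_zero (d : ℕ) (hd : 2 ≤ d) (r : ZMod d) : hh d 0 r = if r = 1 then 1 else 0 := by
  haveI : Subsingleton (Fin (0+1)) := ⟨fun a b => Fin.ext (by omega)⟩
  haveI : Subsingleton (Equiv.Perm (Fin (0+1))) :=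
    ⟨fun a b => Equiv.ext fun x => Subsingleton.elim _ _⟩
  have hQ : ∀ π : Equiv.Perm (Fin 1), QQ d r 0 π ↔ r = 1 := by
    intro π
    have hπ : π = 1 := Subsingleton.elim _ _
    subst hπ
    unfold QQ
    constructor
    · rintro ⟨h1, -⟩
      rw [← h1]
      norm_num
    · intro h
      refine ⟨by rw [h]; norm_num, ?_⟩
      intro x hx
      exact absurd (by rw [Subsingleton.elim x (0 : Fin 1)]) hx
  rw [hh]
  by_cases hr : r = 1
  · rw [if_pos hr, Nat.card_eq_one_iff_exists]
    exact ⟨⟨1, (hQ 1).2 hr⟩, fun y => Subtype.ext (Subsingleton.elim _ _)⟩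
  · rw [if_neg hr]
    have : IsEmpty {π : Equiv.Perm (Fin 1) // QQ d r 0 π} :=
      ⟨fun ⟨π, hπ⟩ => hr ((hQ π).1 hπ)⟩
    exact Nat.card_of_isEmpty

lemma hh_rec (d : ℕ) (hd : 2 ≤ d) (n : ℕ) (hn : 1 ≤ n) (r : ZMod d) :
    hh d n r = (if r = 1 then fd d n else 0) + n * hh d (n - 1) (r - 1) := by
  obtain ⟨m, rfl⟩ : ∃ m, n = m + 1 := ⟨n - 1, by omega⟩
  rw [hh, card_subtype_perm_succ]
  congr 1
  · by_cases hr : r = 1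
    · rw [if_pos hr, fd_succ d hd m, hh]
      apply Nat.card_congr (Equiv.subtypeEquiv (Equiv.refl _) ?_)
      intro e
      simp only [Equiv.refl_apply]
      rw [QQ_symm_zero]
      constructor
      · rintro ⟨-, h⟩
        unfold QQ
        refine ⟨?_, fun x _ => h x⟩
        rw [ZMod.natCast_eq_zero_iff]
        exact h 0
      · rintro ⟨h1, h2⟩
        refine ⟨hr, fun x => ?_⟩
        by_cases hx : e.SameCycle 0 x
        · rw [mp_eq_of_sameCycle hx]
          exact (ZMod.natCast_eq_zero_iff _ _).1 h1
        · exact h2 x hx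
    · rw [if_neg hr]
      have : IsEmpty {e : Equiv.Perm (Fin (m+1)) //
          QQ d r 0 (Equiv.Perm.decomposeFin.symm (0, e))} :=
        ⟨fun ⟨e, he⟩ => hr ((QQ_symm_zero d r e).1 he).1⟩
      exact Nat.card_of_isEmpty
  · have hq : ∀ q : Fin (m+1),
        Nat.card {e : Equiv.Perm (Fin (m+1)) //
          QQ d r 0 (Equiv.Perm.decomposeFin.symm (q.succ, e))} = hh d m (r - 1) := by
      intro q
      have e1 : Nat.card {e : Equiv.Perm (Fin (m+1)) //
          QQ d r 0 (Equiv.Perm.decomposeFin.symm (q.succ, e))} =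
          Nat.card {e : Equiv.Perm (Fin (m+1)) // QQ d (r-1) q e} :=
        Nat.card_congr (Equiv.subtypeEquiv (Equiv.refl _) (fun e => by
          simp only [Equiv.refl_apply]; exact QQ_symm_succ d r e q))
      rw [e1, card_QQ_conj d (r-1) (Equiv.swap q 0) q, Equiv.swap_apply_left, hh]
    rw [Finset.sum_congr rfl (fun q _ => hq q), Finset.sum_const, Finset.card_univ,
      Fintype.card_fin, smul_eq_mul]
    norm_num

end FdAux

open FdAux in
theorem stmt_0 (d n : ℕ) (hd : 2 ≤ d) (hn : d ≤ n) :
    fd d n = (∏ i ∈ Finset.Icc 1 (d - 2), (n - i)) * (n - d + 1) ^ 2 * fd d (n - d) := by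
  have key : ∀ j, j ≤ d - 1 →
      fd d n = (∏ i ∈ Finset.Icc 1 j, (n - i)) * hh d (n - 1 - j) (-(j : ZMod d)) := by
    intro j
    induction j with
    | zero =>
      intro _
      have h0 := fd_succ d hd (n-1)
      rw [show n-1+1 = n by omega] at h0
      simpa using h0
    | succ j ih =>
      intro hj
      have hne : -((j : ℕ) : ZMod d) ≠ 1 := by
        intro hc
        have h1 : (((j+1 : ℕ)) : ZMod d) = 0 := by
          push_cast
          rw [← hc]
          ring
        rw [ZMod.natCast_eq_zero_iff] at h1
        have := Nat.le_of_dvd (by omega) h1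
        omega
      rw [ih (by omega), hh_rec d hd (n - 1 - j) (by omega) _, if_neg hne]
      rw [Finset.prod_Icc_succ_top (by omega : 1 ≤ j + 1)]
      rw [show ((-(((j+1) : ℕ) : ZMod d)) : ZMod d) = -((j : ℕ) : ZMod d) - 1 by push_cast; ring]
      rw [show n - 1 - (j+1) = n - 1 - j - 1 by omega]
      rw [show n - (j+1) = n - 1 - j by omega]
      ring
  have h1 := key (d-1) le_rfl
  have hres : ((-(((d-1) : ℕ) : ZMod d)) : ZMod d) = 1 := by
    have hz : ((d : ℕ) : ZMod d) = 0 := ZMod.natCast_self d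
    rw [Nat.cast_sub (by omega : 1 ≤ d), hz]
    ring
  rw [hres, show n - 1 - (d-1) = n - d by omega] at h1
  have h2 : hh d (n - d) 1 = (n - d + 1) * fd d (n - d) := by
    rcases Nat.eq_zero_or_pos (n - d) with h | h
    · rw [h, hh_zero d hd, if_pos rfl, fd_zero d]
    · rw [hh_rec d hd _ h, if_pos rfl]
      rw [show ((1 : ZMod d) - 1 : ZMod d) = 0 by ring]
      have h3 := fd_succ d hd (n - d - 1)
      rw [show n - d - 1 + 1 = n - d by omega] at h3
      rw [← h3]
      ring
  rw [h1, h2]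
  rw [show d - 1 = (d - 2) + 1 by omega, Finset.prod_Icc_succ_top (by omega : 1 ≤ d - 2 + 1)]
  rw [show n - (d - 2 + 1) = n - d + 1 by omega]
  ring
end

section
/- Let d ≥ 2 divide n, and let f_d(n) be the number of permutations in S_n all of whose cycle lengths are divisible by d. Then f_d(n) ≤ n!·n^{-1+1/d}. -/
open Equiv Equiv.Perm Function

section helpers

variable {α β : Type*}

lemma perm_mem_periodicPts [Finite α] (π : Perm α) (x : α) : x ∈ periodicPts ⇑π := by
  refine ⟨orderOf π, orderOf_pos π, ?_⟩
  simp [IsPeriodicPt, IsFixedPt, iterate_eq_pow, pow_orderOf_eq_one]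

lemma perm_mp_pos [Finite α] (π : Perm α) (x : α) : 0 < minimalPeriod ⇑π x :=
  minimalPeriod_pos_of_mem_periodicPts (perm_mem_periodicPts π x)

lemma sameCycle_mp_eq [Finite α] {π : Perm α} {x y : α} (h : π.SameCycle x y) :
    minimalPeriod ⇑π x = minimalPeriod ⇑π y := by
  obtain ⟨i, hi, rfl⟩ := h.exists_pow_eq'
  rw [← iterate_eq_pow]
  exact (minimalPeriod_apply_iterate (perm_mem_periodicPts π x) i).symm

lemma permCongr_iterate (e : α ≃ β) (π : Perm α) (k : ℕ) (x : α) :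
    (⇑(e.permCongr π))^[k] (e x) = e ((⇑π)^[k] x) := by
  induction k with
  | zero => simp
  | succ k ih => rw [iterate_succ_apply', iterate_succ_apply', ih, permCongr_apply]; simp

lemma permCongr_mp (e : α ≃ β) (π : Perm α) (x : α) :
    minimalPeriod ⇑(e.permCongr π) (e x) = minimalPeriod ⇑π x := by
  rw [minimalPeriod_eq_minimalPeriod_iff]
  intro n
  unfold IsPeriodicPt IsFixedPt
  rw [permCongr_iterate]
  exact e.injective.eq_iff

lemma permCongr_sameCycle_aux [Finite α] (e : α ≃ β) (π : Perm α) {x y : α}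
    (h : π.SameCycle x y) : (e.permCongr π).SameCycle (e x) (e y) := by
  obtain ⟨i, _, rfl⟩ := h.exists_pow_eq'
  refine ⟨(i : ℤ), ?_⟩
  rw [zpow_natCast, ← iterate_eq_pow, permCongr_iterate, ← iterate_eq_pow]

lemma permCongr_permCongr_symm (e : α ≃ β) (π : Perm α) :
    e.symm.permCongr (e.permCongr π) = π := by
  ext x; simp

lemma permCongr_sameCycle [Finite α] [Finite β] (e : α ≃ β) (π : Perm α) (x y : α) :
    (e.permCongr π).SameCycle (e x) (e y) ↔ π.SameCycle x y := by
  constructor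
  · intro h
    have := permCongr_sameCycle_aux e.symm _ h
    rwa [permCongr_permCongr_symm, e.symm_apply_apply, e.symm_apply_apply] at this
  · exact permCongr_sameCycle_aux e π

end helpers


section decomp

/-- insertion of a new point `0` into the cycle of `q.succ`. -/
def dPi {n : ℕ} (σ : Perm (Fin n)) (q : Fin n) : Perm (Fin (n+1)) :=
  Equiv.Perm.decomposeFin.symm (Fin.succ q, σ)

variable {n : ℕ} (σ : Perm (Fin n)) (q : Fin n)

lemma dPi_zero : dPi σ q 0 = Fin.succ q := Equiv.Perm.decomposeFin_symm_apply_zero _ _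

lemma B_apply_succ (x : Fin n) :
    dPi σ q x.succ = if σ x = q then 0 else (σ x).succ := by
  rw [dPi, Equiv.Perm.decomposeFin_symm_apply_succ]
  split_ifs with h
  · rw [h, swap_apply_right]
  · exact swap_apply_of_ne_of_ne (Fin.succ_ne_zero _) (fun hc => h (Fin.succ_injective _ hc))

lemma B1 : ∀ k, k < minimalPeriod ⇑σ q → (⇑(dPi σ q))^[k+1] 0 = ((⇑σ)^[k] q).succ := by
  intro k
  induction k with
  | zero => intro _; simpa using dPi_zero σ q
  | succ k ih =>
    intro hk
    rw [iterate_succ_apply', ih (Nat.lt_of_succ_lt hk), B_apply_succ, if_neg, iterate_succ_apply']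
    intro hc
    refine not_isPeriodicPt_of_pos_of_lt_minimalPeriod (Nat.succ_ne_zero k) hk ?_
    rw [IsPeriodicPt, IsFixedPt, iterate_succ_apply']
    exact hc

lemma B2 : (⇑(dPi σ q))^[minimalPeriod ⇑σ q + 1] 0 = 0 := by
  have hM : 0 < minimalPeriod ⇑σ q := perm_mp_pos σ q
  obtain ⟨m, hm⟩ : ∃ m, minimalPeriod ⇑σ q = m + 1 :=
    ⟨_ - 1, (Nat.succ_pred_eq_of_pos hM).symm⟩
  have h1 : (⇑(dPi σ q))^[m+1] 0 = ((⇑σ)^[m] q).succ := B1 σ q m (by omega)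
  rw [hm, iterate_succ_apply', h1, B_apply_succ, if_pos]
  have := iterate_minimalPeriod (f := ⇑σ) (x := q)
  rw [hm, iterate_succ_apply'] at this
  exact this

lemma B3 : minimalPeriod ⇑(dPi σ q) 0 = minimalPeriod ⇑σ q + 1 := by
  have hM : 0 < minimalPeriod ⇑σ q := perm_mp_pos σ q
  have hle : minimalPeriod ⇑(dPi σ q) 0 ≤ minimalPeriod ⇑σ q + 1 :=
    IsPeriodicPt.minimalPeriod_le (Nat.succ_pos _) (B2 σ q)
  have hpos : 0 < minimalPeriod ⇑(dPi σ q) 0 := perm_mp_pos _ _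
  by_contra hne
  obtain ⟨k, hk⟩ : ∃ k, minimalPeriod ⇑(dPi σ q) 0 = k + 1 :=
    ⟨_ - 1, (Nat.succ_pred_eq_of_pos hpos).symm⟩
  have hkM : k < minimalPeriod ⇑σ q := by omega
  have := B1 σ q k hkM
  rw [← hk, iterate_minimalPeriod] at this
  exact (Fin.succ_ne_zero _) this.symm

lemma B_not_in_cycle {x : Fin n} (hx : ¬ σ.SameCycle q x) :
    ∀ k, (⇑(dPi σ q))^[k] x.succ = ((⇑σ)^[k] x).succ := by
  intro k
  induction k with
  | zero => rfl
  | succ k ih =>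
    rw [iterate_succ_apply', ih, B_apply_succ, if_neg, iterate_succ_apply']
    intro hc
    exact hx (Equiv.Perm.SameCycle.symm ⟨((k+1 : ℕ) : ℤ), by
      rw [zpow_natCast, ← iterate_eq_pow, iterate_succ_apply']; exact hc⟩)

lemma B_mp_not_in_cycle {x : Fin n} (hx : ¬ σ.SameCycle q x) :
    minimalPeriod ⇑(dPi σ q) x.succ = minimalPeriod ⇑σ x := by
  rw [minimalPeriod_eq_minimalPeriod_iff]
  intro m
  unfold IsPeriodicPt IsFixedPt
  rw [B_not_in_cycle σ q hx]
  exact ⟨fun h => Fin.succ_injective _ h, fun h => by rw [h]⟩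

lemma B_sameCycle (x : Fin n) :
    Equiv.Perm.SameCycle (dPi σ q) 0 x.succ ↔ σ.SameCycle q x := by
  constructor
  · intro h
    obtain ⟨i, _, hi⟩ := h.exists_pow_eq'
    rw [← iterate_eq_pow, ← iterate_mod_minimalPeriod_eq, B3] at hi
    rcases Nat.eq_zero_or_pos (i % (minimalPeriod ⇑σ q + 1)) with h0 | hpos
    · rw [h0] at hi
      exact absurd hi.symm (Fin.succ_ne_zero x)
    · obtain ⟨k, hk⟩ : ∃ k, i % (minimalPeriod ⇑σ q + 1) = k + 1 :=
        ⟨_ - 1, (Nat.succ_pred_eq_of_pos hpos).symm⟩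
      have hkM : k < minimalPeriod ⇑σ q := by
        have := Nat.mod_lt i (y := minimalPeriod ⇑σ q + 1) (by omega); omega
      rw [hk, B1 σ q k hkM] at hi
      exact ⟨(k : ℤ), by rw [zpow_natCast, ← iterate_eq_pow]; exact Fin.succ_injective _ hi⟩
  · intro h
    obtain ⟨i, _, hi⟩ := h.exists_pow_eq'
    have hM : 0 < minimalPeriod ⇑σ q := perm_mp_pos σ q
    have h2 : (⇑σ)^[i % minimalPeriod ⇑σ q] q = x := by
      rw [iterate_mod_minimalPeriod_eq, iterate_eq_pow]; exact hi
    refine ⟨((i % minimalPeriod ⇑σ q : ℕ) + 1 : ℕ), ?_⟩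
    rw [zpow_natCast, ← iterate_eq_pow, B1 σ q _ (Nat.mod_lt i hM), h2]

lemma A_apply_succ (x : Fin n) :
    Equiv.Perm.decomposeFin.symm ((0 : Fin (n+1)), σ) x.succ = (σ x).succ := by
  rw [Equiv.Perm.decomposeFin_symm_apply_succ, swap_self]
  rfl

lemma A_iterate (k : ℕ) (x : Fin n) :
    (⇑(Equiv.Perm.decomposeFin.symm ((0 : Fin (n+1)), σ)))^[k] x.succ = ((⇑σ)^[k] x).succ := by
  induction k with
  | zero => rfl
  | succ k ih => rw [iterate_succ_apply', ih, A_apply_succ, iterate_succ_apply']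

lemma A_mp_zero : minimalPeriod ⇑(Equiv.Perm.decomposeFin.symm ((0 : Fin (n+1)), σ)) 0 = 1 :=
  minimalPeriod_eq_one_iff_isFixedPt.2 (Equiv.Perm.decomposeFin_symm_apply_zero 0 σ)

lemma A_mp_succ (x : Fin n) :
    minimalPeriod ⇑(Equiv.Perm.decomposeFin.symm ((0 : Fin (n+1)), σ)) x.succ
      = minimalPeriod ⇑σ x := by
  rw [minimalPeriod_eq_minimalPeriod_iff]
  intro m
  unfold IsPeriodicPt IsFixedPt
  rw [A_iterate]
  exact ⟨fun h => Fin.succ_injective _ h, fun h => by rw [h]⟩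

lemma A_not_sameCycle (x : Fin n) :
    ¬ Equiv.Perm.SameCycle (Equiv.Perm.decomposeFin.symm ((0 : Fin (n+1)), σ)) 0 x.succ := by
  rintro ⟨i, hi⟩
  rw [zpow_apply_eq_self_of_apply_eq_self (Equiv.Perm.decomposeFin_symm_apply_zero 0 σ)] at hi
  exact Fin.succ_ne_zero x hi.symm

end decomp

section counting

/-- All cycles have length divisible by `d`, except the one through `a`,
whose length is `≡ j [MOD d]`. -/
def Qc (d j : ℕ) {n : ℕ} (σ : Perm (Fin n)) (a : Fin n) : Prop :=
  minimalPeriod ⇑σ a ≡ j [MOD d] ∧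
    ∀ x, ¬ σ.SameCycle a x → d ∣ minimalPeriod ⇑σ x

/-- Number of permutations of `n+1` points with the marked condition at `0`. -/
noncomputable def Fc (d j n : ℕ) : ℕ := Nat.card {σ : Perm (Fin (n+1)) // Qc d j σ 0}

lemma qc_conj {d j m : ℕ} (e : Fin m ≃ Fin m) (σ : Perm (Fin m)) (a : Fin m) :
    Qc d j (e.permCongr σ) (e a) ↔ Qc d j σ a := by
  unfold Qc
  rw [permCongr_mp]
  refine and_congr_right fun _ => ?_
  constructor
  · intro H y hy
    have := H (e y) (fun hc => hy ((permCongr_sameCycle e σ a y).1 hc))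
    rwa [permCongr_mp] at this
  · intro H x hx
    have hx' : ¬ σ.SameCycle a (e.symm x) := fun hc => by
      have := (permCongr_sameCycle e σ a (e.symm x)).2 hc
      rw [e.apply_symm_apply] at this
      exact hx this
    have := H _ hx'
    have h2 := permCongr_mp e σ (e.symm x)
    rw [e.apply_symm_apply] at h2
    rwa [h2]

lemma swap_permCongr_permCongr {m : ℕ} (a b : Fin m) (σ : Perm (Fin m)) :
    (Equiv.swap a b).permCongr ((Equiv.swap a b).permCongr σ) = σ := by
  nth_rewrite 1 [show Equiv.swap a b = (Equiv.swap a b).symm from (Equiv.symm_swap a b).symm]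
  exact permCongr_permCongr_symm _ _

/-- Marked counting is independent of the marked point. -/
lemma card_qc_indep {d j n : ℕ} (a : Fin (n+1)) :
    Nat.card {σ : Perm (Fin (n+1)) // Qc d j σ a} = Fc d j n := by
  refine Nat.card_congr ?_
  refine ⟨fun s => ⟨(Equiv.swap a 0).permCongr s.1, ?_⟩,
          fun s => ⟨(Equiv.swap a 0).permCongr s.1, ?_⟩, ?_, ?_⟩
  · have := (qc_conj (Equiv.swap a 0) s.1 a).2 s.2
    rwa [Equiv.swap_apply_left] at this
  · have := (qc_conj (Equiv.swap a 0) s.1 0).2 s.2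
    rwa [Equiv.swap_apply_right] at this
  · intro s; ext1; exact swap_permCongr_permCongr a 0 s.1
  · intro s; ext1; exact swap_permCongr_permCongr a 0 s.1

lemma fd_eq_Fc (d n : ℕ) : fd d (n+1) = Fc d 0 n := by
  refine Nat.card_congr (Equiv.subtypeEquivRight fun π => ?_)
  unfold Qc
  constructor
  · intro h
    exact ⟨(Nat.modEq_zero_iff_dvd).2 (h 0), fun x _ => h x⟩
  · intro h x
    by_cases hx : π.SameCycle 0 x
    · rw [← sameCycle_mp_eq hx]
      exact (Nat.modEq_zero_iff_dvd).1 h.1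
    · exact h.2 x hx

lemma keyB {d j j' n : ℕ} (hj' : j' + 1 ≡ j [MOD d]) (σ : Perm (Fin (n+1))) (q : Fin (n+1)) :
    Qc d j (dPi σ q) 0 ↔ Qc d j' σ q := by
  unfold Qc
  rw [B3]
  constructor
  · rintro ⟨h1, h2⟩
    refine ⟨Nat.ModEq.add_right_cancel' 1 (h1.trans hj'.symm), fun y hy => ?_⟩
    have := h2 y.succ (fun hc => hy ((B_sameCycle σ q y).1 hc))
    rwa [B_mp_not_in_cycle σ q hy] at this
  · rintro ⟨h1, h2⟩
    refine ⟨(h1.add_right 1).trans hj', fun x => ?_⟩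
    refine Fin.cases ?_ ?_ x
    · intro hc; exact absurd (Equiv.Perm.SameCycle.refl _ _) hc
    · intro y hy
      have hy' : ¬ σ.SameCycle q y := fun hc => hy ((B_sameCycle σ q y).2 hc)
      rw [B_mp_not_in_cycle σ q hy']
      exact h2 y hy'

lemma keyA {d j n : ℕ} (hj : ¬ (1 ≡ j [MOD d])) (σ : Perm (Fin (n+1))) :
    ¬ Qc d j (Equiv.Perm.decomposeFin.symm ((0 : Fin (n+2)), σ)) 0 := by
  rintro ⟨h1, -⟩
  rw [A_mp_zero] at h1
  exact hj h1

/-- The main one-step recurrence, away from the residue `1`. -/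
lemma step_ne_one {d j j' n : ℕ} (hj : ¬ (1 ≡ j [MOD d])) (hj' : j' + 1 ≡ j [MOD d]) :
    Fc d j (n+1) = (n+1) * Fc d j' n := by
  have E1 : {π : Perm (Fin (n+2)) // Qc d j π 0}
      ≃ {x : Fin (n+2) × Perm (Fin (n+1)) // Qc d j (Equiv.Perm.decomposeFin.symm x) 0} :=
    Equiv.subtypeEquiv Equiv.Perm.decomposeFin (fun π => by rw [Equiv.symm_apply_apply])
  have hne : ∀ s : {x : Fin (n+2) × Perm (Fin (n+1)) //
      Qc d j (Equiv.Perm.decomposeFin.symm x) 0}, s.1.1 ≠ 0 := by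
    rintro ⟨⟨p, σ⟩, h⟩ h0
    dsimp at h0
    subst h0
    exact keyA hj σ h
  have E2 : {x : Fin (n+2) × Perm (Fin (n+1)) // Qc d j (Equiv.Perm.decomposeFin.symm x) 0}
      ≃ {y : Fin (n+1) × Perm (Fin (n+1)) // Qc d j' y.2 y.1} := by
    refine ⟨fun s => ⟨(s.1.1.pred (hne s), s.1.2), ?_⟩,
      fun s => ⟨(s.1.1.succ, s.1.2), (keyB hj' s.1.2 s.1.1).2 s.2⟩, ?_, ?_⟩
    · refine (keyB hj' s.1.2 _).1 ?_
      show Qc d j (Equiv.Perm.decomposeFin.symm ((s.1.1.pred (hne s)).succ, s.1.2)) 0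
      rw [Fin.succ_pred]
      exact s.2
    · intro s
      apply Subtype.ext
      show ((s.1.1.pred (hne s)).succ, s.1.2) = s.1
      rw [Fin.succ_pred]
    · intro s
      apply Subtype.ext
      show (s.1.1.succ.pred _, s.1.2) = s.1
      rw [Fin.pred_succ]
  have E3 : {y : Fin (n+1) × Perm (Fin (n+1)) // Qc d j' y.2 y.1}
      ≃ Fin (n+1) × {σ : Perm (Fin (n+1)) // Qc d j' σ 0} := by
    refine ⟨fun s => (s.1.1, ⟨(Equiv.swap s.1.1 0).permCongr s.1.2, ?_⟩),
      fun t => ⟨(t.1, (Equiv.swap t.1 0).permCongr t.2.1), ?_⟩, ?_, ?_⟩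
    · have := (qc_conj (Equiv.swap s.1.1 0) s.1.2 s.1.1).2 s.2
      rwa [Equiv.swap_apply_left] at this
    · have := (qc_conj (Equiv.swap t.1 0) t.2.1 0).2 t.2.2
      rwa [Equiv.swap_apply_right] at this
    · intro s
      ext : 2
      · rfl
      · show ((Equiv.swap s.1.1 0).permCongr ((Equiv.swap s.1.1 0).permCongr s.1.2)) = s.1.2
        exact swap_permCongr_permCongr _ _ _
    · intro t
      refine Prod.ext rfl (Subtype.ext ?_)
      exact swap_permCongr_permCongr _ _ _
  have := Nat.card_congr ((E1.trans E2).trans E3)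
  rw [Fc, this, Nat.card_prod, Nat.card_eq_fintype_card, Fintype.card_fin, Fc]

end counting

section assemble

lemma absorb {d n : ℕ} (p : Fin (n+1)) (σ : Perm (Fin n)) :
    Qc d 1 (Equiv.Perm.decomposeFin.symm (p, σ)) 0 ↔ ∀ y, d ∣ minimalPeriod ⇑σ y := by
  induction p using Fin.cases with
  | zero =>
    unfold Qc
    constructor
    · rintro ⟨-, h2⟩ y
      have := h2 y.succ (A_not_sameCycle σ y)
      rwa [A_mp_succ] at this
    · intro h
      refine ⟨by rw [A_mp_zero], fun x => ?_⟩
      refine Fin.cases ?_ ?_ x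
      · intro hc; exact absurd (Equiv.Perm.SameCycle.refl _ _) hc
      · intro y _
        rw [A_mp_succ]
        exact h y
  | succ q =>
    show Qc d 1 (dPi σ q) 0 ↔ _
    unfold Qc
    rw [B3]
    constructor
    · rintro ⟨h1, h2⟩ y
      have hdvd : d ∣ minimalPeriod ⇑σ q := by
        refine (Nat.modEq_zero_iff_dvd).1 (Nat.ModEq.add_right_cancel' 1 ?_)
        simpa using h1
      by_cases hy : σ.SameCycle q y
      · rw [← sameCycle_mp_eq hy]
        exact hdvd
      · have := h2 y.succ (fun hc => hy ((B_sameCycle σ q y).1 hc))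
        rwa [B_mp_not_in_cycle σ q hy] at this
    · intro h
      refine ⟨by simpa using (Nat.modEq_zero_iff_dvd.2 (h q)).add_right 1, fun x => ?_⟩
      refine Fin.cases ?_ ?_ x
      · intro hc; exact absurd (Equiv.Perm.SameCycle.refl _ _) hc
      · intro y hy
        have hy' : ¬ σ.SameCycle q y := fun hc => hy ((B_sameCycle σ q y).2 hc)
        rw [B_mp_not_in_cycle σ q hy']
        exact h y

lemma step_one {d n : ℕ} : Fc d 1 n = (n+1) * fd d n := by
  have E1 : {π : Perm (Fin (n+1)) // Qc d 1 π 0}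
      ≃ {x : Fin (n+1) × Perm (Fin n) // Qc d 1 (Equiv.Perm.decomposeFin.symm x) 0} :=
    Equiv.subtypeEquiv Equiv.Perm.decomposeFin (fun π => by rw [Equiv.symm_apply_apply])
  have E2 : {x : Fin (n+1) × Perm (Fin n) // Qc d 1 (Equiv.Perm.decomposeFin.symm x) 0}
      ≃ {x : Fin (n+1) × Perm (Fin n) // ∀ y, d ∣ minimalPeriod ⇑x.2 y} :=
    Equiv.subtypeEquivRight (fun x => absorb x.1 x.2)
  have E3 : {x : Fin (n+1) × Perm (Fin n) // ∀ y, d ∣ minimalPeriod ⇑x.2 y}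
      ≃ Fin (n+1) × {σ : Perm (Fin n) // ∀ y, d ∣ minimalPeriod ⇑σ y} :=
    ⟨fun s => (s.1.1, ⟨s.1.2, s.2⟩), fun t => ⟨(t.1, t.2.1), t.2.2⟩,
      fun s => rfl, fun t => rfl⟩
  have := Nat.card_congr ((E1.trans E2).trans E3)
  rw [Fc, this, Nat.card_prod, Nat.card_eq_fintype_card, Fintype.card_fin, fd]

lemma fd_zero (d : ℕ) : fd d 0 = 1 := by
  have h : ∀ π : Perm (Fin 0), ∀ x, d ∣ minimalPeriod ⇑π x := fun π x => x.elim0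
  rw [fd, Nat.card_congr (Equiv.subtypeUnivEquiv (h ·)), Nat.card_eq_fintype_card,
    Fintype.card_perm, Fintype.card_fin]
  rfl

lemma chain {d n : ℕ} (hd : 2 ≤ d) :
    ∀ t, t ≤ d - 2 →
      Fc d (t+1) (n + t) = (∏ i ∈ Finset.Ico 1 (t+1), (n + i)) * ((n+1) * fd d n) := by
  intro t
  induction t with
  | zero => intro _; simpa using step_one
  | succ t ih =>
    intro ht
    have h1 : ¬ (1 ≡ t + 2 [MOD d]) := by
      intro hc
      rcases Nat.lt_or_ge (t+2) d with h | h
      · have := hc.eq_of_lt_of_lt (by omega) h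
        omega
      · have hed : t + 2 = d := by omega
        rw [hed] at hc
        have := Nat.le_of_dvd one_pos
          ((Nat.modEq_zero_iff_dvd).1 (hc.trans (Nat.modEq_zero_iff_dvd.2 dvd_rfl)))
        omega
    have h2 : (t + 1) + 1 ≡ t + 2 [MOD d] := by rfl
    have hstep : Fc d (t+2) ((n+t)+1) = ((n+t)+1) * Fc d (t+1) (n+t) := step_ne_one h1 h2
    rw [show n + (t+1) = (n+t)+1 by ring, hstep, ih (by omega),
      Finset.prod_Ico_succ_top (by omega : 1 ≤ t + 1)]
    ring

lemma fd_recurrence {d n : ℕ} (hd : 2 ≤ d) :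
    fd d (n + d) = (∏ i ∈ Finset.Ico 1 d, (n + i)) * ((n+1) * fd d n) := by
  obtain ⟨e, rfl⟩ : ∃ e, d = e + 2 := ⟨d - 2, by omega⟩
  have h0 : fd (e+2) (n + (e+2)) = Fc (e+2) 0 (n + e + 1) := by
    rw [show n + (e+2) = (n + e + 1) + 1 by ring, fd_eq_Fc]
  have h1 : ¬ (1 ≡ 0 [MOD (e+2)]) := by
    intro hc
    have := Nat.le_of_dvd one_pos ((Nat.modEq_zero_iff_dvd).1 hc)
    omega
  have h2 : (e + 1) + 1 ≡ 0 [MOD (e+2)] := Nat.modEq_zero_iff_dvd.2 dvd_rfl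
  have hstep : Fc (e+2) 0 ((n+e)+1) = ((n+e)+1) * Fc (e+2) (e+1) (n+e) := step_ne_one h1 h2
  rw [h0, show n + e + 1 = (n+e)+1 from rfl, hstep, chain hd e (by omega),
    Finset.prod_Ico_succ_top (by omega : 1 ≤ e + 1)]
  ring

lemma fact_prod (n d : ℕ) :
    (n + d).factorial = n.factorial * ∏ i ∈ Finset.Ico 1 (d+1), (n + i) := by
  induction d with
  | zero => simp
  | succ d ih =>
    rw [show n + (d+1) = (n+d)+1 by ring, Nat.factorial_succ,
      Finset.prod_Ico_succ_top (by omega : 1 ≤ d + 1), ih]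
    ring

lemma fd_key_identity {d n : ℕ} (hd : 2 ≤ d) :
    fd d (n + d) * ((n + d) * n.factorial)
      = (n + d).factorial * ((n+1) * fd d n) := by
  rw [fd_recurrence hd, fact_prod n d,
    Finset.prod_Ico_succ_top (by omega : 1 ≤ d), show n + d = n + d from rfl]
  ring

end assemble

section analysis

lemma fd_bound (d : ℕ) (hd : 2 ≤ d) :
    ∀ m : ℕ, (fd d (m*d) : ℝ) * (((m*d : ℕ) : ℝ) + 1) ^ (1 - 1/(d:ℝ))
      ≤ (((m*d).factorial : ℕ) : ℝ) := by
  have hd0 : (0:ℝ) < (d:ℝ) := by exact_mod_cast (by omega : 0 < d)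
  have hbnn : (0:ℝ) ≤ 1/(d:ℝ) := by positivity
  have hann : (0:ℝ) ≤ 1 - 1/(d:ℝ) := by
    rw [sub_nonneg, div_le_one hd0]
    exact_mod_cast (by omega : 1 ≤ d)
  intro m
  induction m with
  | zero => simp [fd_zero]
  | succ m ih =>
    set n := m * d with hn
    rw [show (m+1)*d = n+d by rw [hn]; ring]
    have key := fd_key_identity (d := d) (n := n) hd
    have hkey : (fd d (n + d) : ℝ) * (((n:ℝ) + (d:ℝ)) * ((n.factorial : ℕ) : ℝ))
        = (((n+d).factorial : ℕ) : ℝ) * (((n:ℝ)+1) * (fd d n : ℝ)) := by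
      exact_mod_cast congrArg (Nat.cast : ℕ → ℝ) key
    have hysplit : ((n:ℝ)+1) = ((n:ℝ)+1)^(1 - 1/(d:ℝ)) * ((n:ℝ)+1)^(1/(d:ℝ)) := by
      rw [← Real.rpow_add (by positivity : (0:ℝ) < (n:ℝ)+1),
        show (1 - 1/(d:ℝ)) + 1/(d:ℝ) = 1 by ring, Real.rpow_one]
    have hAM : ((n:ℝ)+1) ^ (1/(d:ℝ)) * ((n:ℝ)+(d:ℝ)+1) ^ (1 - 1/(d:ℝ))
        ≤ (1/(d:ℝ)) * ((n:ℝ)+1) + (1 - 1/(d:ℝ)) * ((n:ℝ)+(d:ℝ)+1) :=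
      Real.geom_mean_le_arith_mean2_weighted hbnn hann (by positivity) (by positivity)
        (by ring)
    have hmean : (1/(d:ℝ)) * ((n:ℝ)+1) + (1 - 1/(d:ℝ)) * ((n:ℝ)+(d:ℝ)+1)
        = (n:ℝ) + (d:ℝ) := by
      field_simp
      ring
    rw [hmean] at hAM
    have hNn : (0:ℝ) < ((n:ℝ)+(d:ℝ)) * ((n.factorial : ℕ) : ℝ) := by positivity
    rw [← mul_le_mul_iff_of_pos_right hNn]
    have hcast : (((n+d : ℕ) : ℝ)) + 1 = (n:ℝ)+(d:ℝ)+1 := by push_cast; ring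
    rw [hcast]
    calc (fd d (n+d) : ℝ) * ((n:ℝ)+(d:ℝ)+1)^(1 - 1/(d:ℝ))
          * (((n:ℝ)+(d:ℝ)) * ((n.factorial : ℕ) : ℝ))
        = ((fd d (n+d) : ℝ) * (((n:ℝ)+(d:ℝ)) * ((n.factorial : ℕ) : ℝ)))
            * ((n:ℝ)+(d:ℝ)+1)^(1 - 1/(d:ℝ)) := by ring
      _ = (((n+d).factorial : ℕ) : ℝ)
            * (((n:ℝ)+1) * (fd d n : ℝ) * ((n:ℝ)+(d:ℝ)+1)^(1 - 1/(d:ℝ))) := by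
          rw [hkey]; ring
      _ = (((n+d).factorial : ℕ) : ℝ)
            * (((fd d n : ℝ) * ((n:ℝ)+1)^(1 - 1/(d:ℝ)))
              * (((n:ℝ)+1)^(1/(d:ℝ)) * ((n:ℝ)+(d:ℝ)+1)^(1 - 1/(d:ℝ)))) := by
          nth_rewrite 1 [hysplit]
          ring
      _ ≤ (((n+d).factorial : ℕ) : ℝ)
            * (((n.factorial : ℕ) : ℝ) * ((n:ℝ)+(d:ℝ))) := by
          refine mul_le_mul_of_nonneg_left ?_ (by positivity)
          refine mul_le_mul ?_ hAM (by positivity) (by positivity)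
          have := ih
          push_cast at this ⊢
          convert this using 2
      _ = (((n+d).factorial : ℕ) : ℝ) * (((n:ℝ)+(d:ℝ)) * ((n.factorial : ℕ) : ℝ)) := by
          ring

end analysis

theorem stmt_1 (d n : ℕ) (hd : 2 ≤ d) (hdn : d ∣ n) (hn : 0 < n) :
    (fd d n : ℝ) ≤ (n.factorial : ℝ) * (n : ℝ) ^ (-1 + 1 / (d : ℝ) : ℝ) := by
  obtain ⟨m, rfl⟩ := hdn
  rw [show d * m = m * d from Nat.mul_comm d m] at *
  have hd0 : (0:ℝ) < (d:ℝ) := by exact_mod_cast (by omega : 0 < d)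
  have hann : (0:ℝ) ≤ 1 - 1/(d:ℝ) := by
    rw [sub_nonneg, div_le_one hd0]
    exact_mod_cast (by omega : 1 ≤ d)
  have hNpos : (0:ℝ) < ((m*d : ℕ) : ℝ) := by exact_mod_cast hn
  have h1 := fd_bound d hd m
  have h2 : ((m*d : ℕ) : ℝ) ^ (1 - 1/(d:ℝ)) ≤ (((m*d : ℕ) : ℝ) + 1) ^ (1 - 1/(d:ℝ)) :=
    Real.rpow_le_rpow (by positivity) (by linarith) hann
  have h3 : (fd d (m*d) : ℝ) * ((m*d : ℕ) : ℝ) ^ (1 - 1/(d:ℝ)) ≤ (((m*d).factorial : ℕ) : ℝ) :=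
    le_trans (mul_le_mul_of_nonneg_left h2 (by positivity)) h1
  have h4 : (0:ℝ) < ((m*d : ℕ) : ℝ) ^ (1 - 1/(d:ℝ)) := Real.rpow_pos_of_pos hNpos _
  rw [show (-1 + 1/(d:ℝ)) = -(1 - 1/(d:ℝ)) by ring, Real.rpow_neg (le_of_lt hNpos),
    ← div_eq_mul_inv, le_div_iff₀ h4]
  exact h3
end

section
/- Let n = n' + n''. Let i(n, k, d) denote the proportion of permutations π ∈ S_n that admit pairwise disjoint π-invariant sets A_1,…,A_m with |A_i| = k_i and all cycles of π restricted to A_i having length divisible by d_i, where k = (k_1,…,k_m) and d = (d_1,…,d_m) and Σ k_i = n. If k = (k', k'') and d = (d', d'') where k' sums to n' and k'' sums to n'', then i(n, k, d) ≤ i(n', k', d') · i(n'', k'', d''). -/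
open Equiv Function Finset

def Good {α : Type*} [DecidableEq α] (m : ℕ) (k d : Fin m → ℕ) (π : Equiv.Perm α) : Prop :=
  ∃ A : Fin m → Finset α,
    (∀ i j, i ≠ j → Disjoint (A i) (A j)) ∧
    (∀ i, (A i).card = k i) ∧
    (∀ i, ∀ x ∈ A i, π x ∈ A i) ∧
    (∀ i, ∀ x ∈ A i, d i ∣ Function.minimalPeriod (⇑π) x)

lemma minimalPeriod_semiconj {α β : Type*} {g : α → β} (hg : Function.Injective g)
    {f₁ : α → α} {f₂ : β → β} (h : Function.Semiconj g f₁ f₂) (x : α) :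
    Function.minimalPeriod f₂ (g x) = Function.minimalPeriod f₁ x := by
  have key : ∀ n, Function.IsPeriodicPt f₂ n (g x) ↔ Function.IsPeriodicPt f₁ n x := by
    intro n
    unfold Function.IsPeriodicPt Function.IsFixedPt
    rw [← (h.iterate_right n).eq x]
    exact hg.eq_iff
  apply Nat.dvd_antisymm
  · exact Function.IsPeriodicPt.minimalPeriod_dvd
      ((key _).mpr (Function.isPeriodicPt_minimalPeriod f₁ x))
  · exact Function.IsPeriodicPt.minimalPeriod_dvd
      ((key _).mp (Function.isPeriodicPt_minimalPeriod f₂ (g x)))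

noncomputable def restrictPerm {n : ℕ} (r : ℕ) (π : Equiv.Perm (Fin n))
    (S : Finset (Fin n)) : Equiv.Perm (Fin r) :=
  if h : S.card = r ∧ ∀ x, x ∈ S ↔ π x ∈ S then
    (Fintype.equivFinOfCardEq (by simp [Fintype.card_coe, h.1])).permCongr
      (π.subtypePerm (fun x => (h.2 x).symm))
  else 1

lemma good_restrict {n : ℕ} (r m : ℕ) (π : Equiv.Perm (Fin n)) (S : Finset (Fin n))
    (hScard : S.card = r) (hinv : ∀ x, x ∈ S ↔ π x ∈ S)
    (k d : Fin m → ℕ) (A : Fin m → Finset (Fin n))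
    (hsub : ∀ i, A i ⊆ S)
    (hdisj : ∀ i j, i ≠ j → Disjoint (A i) (A j))
    (hcard : ∀ i, (A i).card = k i)
    (hinvA : ∀ i, ∀ x ∈ A i, π x ∈ A i)
    (hdvd : ∀ i, ∀ x ∈ A i, d i ∣ Function.minimalPeriod (⇑π) x) :
    Good m k d (restrictPerm r π S) := by
  classical
  rw [restrictPerm, dif_pos ⟨hScard, hinv⟩]
  set e : ↥S ≃ Fin r := Fintype.equivFinOfCardEq (by simp [Fintype.card_coe, hScard]) with he
  set π₀ := π.subtypePerm (fun x => (hinv x).symm) with hπ₀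
  set g : Fin r → Fin n := fun y => ((e.symm y : ↥S) : Fin n) with hg
  have hginj : Function.Injective g := by
    intro a b hab
    exact e.symm.injective (Subtype.ext hab)
  have hsemi : Function.Semiconj g (⇑(e.permCongr π₀)) (⇑π) := by
    intro y
    simp [hg, Equiv.permCongr_apply, hπ₀, Equiv.Perm.subtypePerm_apply]
  refine ⟨fun i => ((A i).subtype (· ∈ S)).map ⟨fun z => e z, fun a b hab => e.injective hab⟩,
    ?_, ?_, ?_, ?_⟩
  · intro i j hij
    rw [Finset.disjoint_left]
    intro y hy hy'
    simp only [Finset.mem_map, Finset.mem_subtype, Function.Embedding.coeFn_mk] at hy hy'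
    obtain ⟨z, hz, hzy⟩ := hy
    obtain ⟨w, hw, hwy⟩ := hy'
    have : z = w := e.injective (hzy.trans hwy.symm)
    exact (Finset.disjoint_left.mp (hdisj i j hij) hz) (this ▸ hw)
  · intro i
    rw [Finset.card_map, Finset.card_subtype, Finset.filter_true_of_mem (fun x hx => hsub i hx)]
    exact hcard i
  · intro i y hy
    simp only [Finset.mem_map, Finset.mem_subtype, Function.Embedding.coeFn_mk] at hy ⊢
    obtain ⟨z, hz, hzy⟩ := hy
    refine ⟨π₀ z, hinvA i _ hz, ?_⟩
    rw [← hzy]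
    simp [Equiv.permCongr_apply]
  · intro i y hy
    simp only [Finset.mem_map, Finset.mem_subtype, Function.Embedding.coeFn_mk] at hy
    obtain ⟨z, hz, hzy⟩ := hy
    have : Function.minimalPeriod (⇑(e.permCongr π₀)) y
        = Function.minimalPeriod (⇑π) (g y) := (minimalPeriod_semiconj hginj hsemi y).symm
    rw [this]
    have hgy : g y ∈ A i := by
      rw [← hzy]
      simpa [hg] using hz
    exact hdvd i _ hgy

lemma restrict_eq_imp {n : ℕ} (r : ℕ) (π σ : Equiv.Perm (Fin n)) (S : Finset (Fin n))
    (hcard : S.card = r)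
    (hπ : ∀ x, x ∈ S ↔ π x ∈ S) (hσ : ∀ x, x ∈ S ↔ σ x ∈ S)
    (heq : restrictPerm r π S = restrictPerm r σ S) : ∀ x ∈ S, π x = σ x := by
  rw [restrictPerm, restrictPerm, dif_pos ⟨hcard, hπ⟩, dif_pos ⟨hcard, hσ⟩] at heq
  have h2 := (Equiv.permCongr _).injective heq
  intro x hx
  have h3 := congrArg (fun τ : Equiv.Perm ↥S => ((τ ⟨x, hx⟩ : ↥S) : Fin n)) h2
  simpa [Equiv.Perm.subtypePerm_apply] using h3

lemma compl_inv {n : ℕ} (π : Equiv.Perm (Fin n)) (S : Finset (Fin n))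
    (hinv : ∀ x, x ∈ S ↔ π x ∈ S) : ∀ x, x ∈ Sᶜ ↔ π x ∈ Sᶜ := by
  intro x
  simp only [Finset.mem_compl]
  exact not_iff_not.mpr (hinv x)

lemma key_exists (n' n'' m' m'' : ℕ) (k' d' : Fin m' → ℕ) (k'' d'' : Fin m'' → ℕ)
    (hk' : ∑ i, k' i = n') (hk'' : ∑ i, k'' i = n'')
    (π : Equiv.Perm (Fin (n' + n'')))
    (hπ : Good (m' + m'') (Fin.append k' k'') (Fin.append d' d'') π) :
    ∃ S : Finset (Fin (n' + n'')),
      S.card = n' ∧ Sᶜ.card = n'' ∧ (∀ x, x ∈ S ↔ π x ∈ S) ∧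
      Good m' k' d' (restrictPerm n' π S) ∧
      Good m'' k'' d'' (restrictPerm n'' π Sᶜ) := by
  classical
  obtain ⟨A, hdisj, hcard, hinvA, hdvd⟩ := hπ
  set S : Finset (Fin (n' + n'')) :=
    Finset.univ.biUnion (fun i : Fin m' => A (Fin.castAdd m'' i)) with hS
  have hmemS : ∀ x, x ∈ S ↔ ∃ i : Fin m', x ∈ A (Fin.castAdd m'' i) := by
    intro x; simp [hS]
  have hScard : S.card = n' := by
    rw [hS, Finset.card_biUnion (fun i _ j _ hij =>
      hdisj _ _ (fun h => hij (Fin.castAdd_injective m' m'' h)))]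
    exact (Finset.sum_congr rfl fun i _ => by rw [hcard, Fin.append_left]).trans hk'
  have hfwd : ∀ x ∈ S, π x ∈ S := by
    intro x hx
    obtain ⟨i, hi⟩ := (hmemS x).mp hx
    exact (hmemS _).mpr ⟨i, hinvA _ _ hi⟩
  have himg : S.image π = S := by
    apply Finset.eq_of_subset_of_card_le
    · intro y hy
      obtain ⟨x, hx, rfl⟩ := Finset.mem_image.mp hy
      exact hfwd x hx
    · rw [Finset.card_image_of_injective _ π.injective]
  have hinv : ∀ x, x ∈ S ↔ π x ∈ S := by
    intro x
    refine ⟨hfwd x, fun h => ?_⟩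
    rw [← himg] at h
    obtain ⟨y, hy, hyx⟩ := Finset.mem_image.mp h
    rwa [← π.injective hyx]
  have hSccard : Sᶜ.card = n'' := by
    rw [Finset.card_compl, hScard, Fintype.card_fin]
    omega
  have hsubc : ∀ i : Fin m'', A (Fin.natAdd m' i) ⊆ Sᶜ := by
    intro i x hx
    rw [Finset.mem_compl]
    intro hxS
    obtain ⟨j, hj⟩ := (hmemS x).mp hxS
    have hne : Fin.natAdd m' i ≠ Fin.castAdd m'' j := by
      apply Fin.ne_of_val_ne
      show m' + (i : ℕ) ≠ (j : ℕ)
      have := j.isLt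
      omega
    exact Finset.disjoint_left.mp (hdisj _ _ hne) hx hj
  refine ⟨S, hScard, hSccard, hinv, ?_, ?_⟩
  · refine good_restrict n' m' π S hScard hinv k' d' (fun i => A (Fin.castAdd m'' i))
      (fun i x hx => (hmemS x).mpr ⟨i, hx⟩)
      (fun i j hij => hdisj _ _ (fun h => hij (Fin.castAdd_injective m' m'' h)))
      (fun i => by rw [hcard, Fin.append_left])
      (fun i x hx => hinvA _ x hx)
      (fun i x hx => by rw [← Fin.append_left d' d'' i]; exact hdvd _ x hx)
  · refine good_restrict n'' m'' π Sᶜ hSccard (compl_inv π S hinv) k'' d''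
      (fun i => A (Fin.natAdd m' i))
      hsubc
      (fun i j hij => hdisj _ _ (fun h => hij ((Fin.natAddEmb m').injective h)))
      (fun i => by rw [hcard, Fin.append_right])
      (fun i x hx => hinvA _ x hx)
      (fun i x hx => by rw [← Fin.append_right d' d'' i]; exact hdvd _ x hx)

lemma card_le (n' n'' m' m'' : ℕ) (k' d' : Fin m' → ℕ) (k'' d'' : Fin m'' → ℕ)
    (hk' : ∑ i, k' i = n') (hk'' : ∑ i, k'' i = n'') :
    Nat.card {π : Equiv.Perm (Fin (n' + n'')) //
        Good (m' + m'') (Fin.append k' k'') (Fin.append d' d'') π} ≤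
    (n' + n'').choose n' *
      (Nat.card {π : Equiv.Perm (Fin n') // Good m' k' d' π} *
       Nat.card {π : Equiv.Perm (Fin n'') // Good m'' k'' d'' π}) := by
  classical
  obtain ⟨Sf, hSf⟩ := Classical.axiomOfChoice
    (fun p : {π : Equiv.Perm (Fin (n' + n'')) //
        Good (m' + m'') (Fin.append k' k'') (Fin.append d' d'') π} =>
      key_exists n' n'' m' m'' k' d' k'' d'' hk' hk'' p.1 p.2)
  set f : {π : Equiv.Perm (Fin (n' + n'')) //
        Good (m' + m'') (Fin.append k' k'') (Fin.append d' d'') π} →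
      {S : Finset (Fin (n' + n'')) // S.card = n'} ×
      {π : Equiv.Perm (Fin n') // Good m' k' d' π} ×
      {π : Equiv.Perm (Fin n'') // Good m'' k'' d'' π} :=
    fun p => (⟨Sf p, (hSf p).1⟩,
      ⟨restrictPerm n' p.1 (Sf p), (hSf p).2.2.2.1⟩,
      ⟨restrictPerm n'' p.1 (Sf p)ᶜ, (hSf p).2.2.2.2⟩) with hf
  have hinj : Function.Injective f := by
    intro p q hpq
    rw [hf, Prod.ext_iff, Prod.ext_iff] at hpq
    obtain ⟨h1, h2, h3⟩ := hpq
    have hS : Sf p = Sf q := congrArg Subtype.val h1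
    have h2' : restrictPerm n' p.1 (Sf p) = restrictPerm n' q.1 (Sf q) :=
      congrArg Subtype.val h2
    rw [← hS] at h2'
    have h3' : restrictPerm n'' p.1 (Sf p)ᶜ = restrictPerm n'' q.1 (Sf q)ᶜ :=
      congrArg Subtype.val h3
    rw [← hS] at h3'
    have hinvq : ∀ x, x ∈ Sf p ↔ q.1 x ∈ Sf p := by rw [hS]; exact (hSf q).2.2.1
    have hagree := restrict_eq_imp n' p.1 q.1 (Sf p) (hSf p).1 (hSf p).2.2.1 hinvq h2'
    have hagreec := restrict_eq_imp n'' p.1 q.1 (Sf p)ᶜ (hSf p).2.1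
      (compl_inv p.1 (Sf p) (hSf p).2.2.1) (compl_inv q.1 (Sf p) hinvq) h3'
    apply Subtype.ext
    apply Equiv.ext
    intro x
    by_cases hx : x ∈ Sf p
    · exact hagree x hx
    · exact hagreec x (Finset.mem_compl.mpr hx)
  calc Nat.card {π : Equiv.Perm (Fin (n' + n'')) //
        Good (m' + m'') (Fin.append k' k'') (Fin.append d' d'') π}
      ≤ Nat.card ({S : Finset (Fin (n' + n'')) // S.card = n'} ×
        {π : Equiv.Perm (Fin n') // Good m' k' d' π} ×
        {π : Equiv.Perm (Fin n'') // Good m'' k'' d'' π}) :=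
        Nat.card_le_card_of_injective f hinj
    _ = (n' + n'').choose n' *
        (Nat.card {π : Equiv.Perm (Fin n') // Good m' k' d' π} *
         Nat.card {π : Equiv.Perm (Fin n'') // Good m'' k'' d'' π}) := by
        rw [Nat.card_prod, Nat.card_prod]
        congr 1
        rw [Nat.card_eq_fintype_card, Fintype.card_finset_len, Fintype.card_fin]

/-- `iProp n m k d` is the proportion of permutations `π` of `n` points that admit
pairwise disjoint `π`-invariant sets `A 0, …, A (m-1)` with `(A i).card = k i` and
all cycles of `π` restricted to `A i` of length divisible by `d i`. -/
noncomputable def iProp (n m : ℕ) (k d : Fin m → ℕ) : ℝ :=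
  (Nat.card {π : Equiv.Perm (Fin n) //
      ∃ A : Fin m → Finset (Fin n),
        (∀ i j, i ≠ j → Disjoint (A i) (A j)) ∧
        (∀ i, (A i).card = k i) ∧
        (∀ i, ∀ x ∈ A i, π x ∈ A i) ∧
        (∀ i, ∀ x ∈ A i, d i ∣ Function.minimalPeriod (⇑π) x)} : ℝ) /
    (n.factorial : ℝ)

lemma iProp_eq (n m : ℕ) (k d : Fin m → ℕ) :
    iProp n m k d =
      (Nat.card {π : Equiv.Perm (Fin n) // Good m k d π} : ℝ) / (n.factorial : ℝ) := rfl

theorem stmt_4 (n' n'' m' m'' : ℕ) (k' d' : Fin m' → ℕ) (k'' d'' : Fin m'' → ℕ)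
    (hk' : ∑ i, k' i = n') (hk'' : ∑ i, k'' i = n'') :
    iProp (n' + n'') (m' + m'') (Fin.append k' k'') (Fin.append d' d'') ≤
      iProp n' m' k' d' * iProp n'' m'' k'' d'' := by
  have hcount := card_le n' n'' m' m'' k' d' k'' d'' hk' hk''
  rw [iProp_eq, iProp_eq, iProp_eq]
  set Na := Nat.card {π : Equiv.Perm (Fin (n' + n'')) //
      Good (m' + m'') (Fin.append k' k'') (Fin.append d' d'') π} with hNa
  set Nb := Nat.card {π : Equiv.Perm (Fin n') // Good m' k' d' π} with hNb
  set Nc := Nat.card {π : Equiv.Perm (Fin n'') // Good m'' k'' d'' π} with hNc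
  have hfacpos : (0:ℝ) < ((n' + n'').factorial : ℝ) :=
    Nat.cast_pos.mpr (n' + n'').factorial_pos
  have hfacpos' : (0:ℝ) < ((n'.factorial : ℝ) * (n''.factorial : ℝ)) := by
    have h1 : (0:ℝ) < (n'.factorial : ℝ) := Nat.cast_pos.mpr n'.factorial_pos
    have h2 : (0:ℝ) < (n''.factorial : ℝ) := Nat.cast_pos.mpr n''.factorial_pos
    exact mul_pos h1 h2
  rw [div_mul_div_comm, div_le_div_iff₀ hfacpos hfacpos']
  have hc : (Na : ℝ) ≤ ((n' + n'').choose n' : ℝ) * ((Nb : ℝ) * (Nc : ℝ)) := by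
    exact_mod_cast hcount
  have hfac : ((n' + n'').factorial : ℝ) =
      ((n' + n'').choose n' : ℝ) * (n'.factorial : ℝ) * (n''.factorial : ℝ) := by
    rw [Nat.choose_symm_add, ← Nat.add_choose_mul_factorial_mul_factorial n' n'']
    push_cast
    ring
  calc (Na : ℝ) * ((n'.factorial : ℝ) * (n''.factorial : ℝ))
      ≤ (((n' + n'').choose n' : ℝ) * ((Nb : ℝ) * (Nc : ℝ))) *
        ((n'.factorial : ℝ) * (n''.factorial : ℝ)) :=
        mul_le_mul_of_nonneg_right hc (le_of_lt hfacpos')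
    _ = (Nb : ℝ) * (Nc : ℝ) * ((n' + n'').factorial : ℝ) := by
        rw [hfac]; ring
end

section
/- Let X_1,…,X_k be independent Poisson random variables with E X_j = 1/j, and let L_m(c) be the set of m-tuples (Σ_j j·x_{1j}, …, Σ_j j·x_{mj}) over m×k nonnegative integer matrices with column sums c_j. If k ≤ k', then E|L_m(X_1,…,X_{k'})| ≤ (k'/k)^{m-1} · E|L_m(X_1,…,X_k)|. -/
/-- `Lset m k c` is the set of `m`-tuples `(∑ j, j * x i j)_i` (with `j` ranging over
`1, …, k`) as `x` ranges over `m × k` matrices of nonnegative integers whose `j`-th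
column sums to `c j`. -/
def Lset (m k : ℕ) (c : Fin k → ℕ) : Set (Fin m → ℕ) :=
  {v | ∃ x : Fin m → Fin k → ℕ,
        (∀ j, ∑ i, x i j = c j) ∧ ∀ i, v i = ∑ j, (j.val + 1) * x i j}

/-- The Poisson probability mass function with mean `μ`. -/
noncomputable def poissonP (μ : ℝ) (r : ℕ) : ℝ :=
  Real.exp (-μ) * μ ^ r / r.factorial

/-- The expectation of `f (X 1, …, X k)` where `X 1, …, X k` are independent
Poisson random variables with `E (X j) = 1 / j`.  (The variable indexed by
`j : Fin k` is Poisson with mean `1 / (j + 1)`.) -/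
noncomputable def pexp (k : ℕ) (f : (Fin k → ℕ) → ℝ) : ℝ :=
  ∑' c : Fin k → ℕ, (∏ j : Fin k, poissonP (1 / ((j : ℕ) + 1 : ℝ)) (c j)) * f c

open scoped ENNReal

-- finiteness of tuple sets
instance tupleFinite (m c : ℕ) : Finite {t : Fin m → ℕ // ∑ i, t i = c} := by
  have : ∀ t : {t : Fin m → ℕ // ∑ i, t i = c}, ∀ i, t.1 i < c + 1 := by
    intro t i
    have := Finset.single_le_sum (f := t.1) (fun i _ => Nat.zero_le _) (Finset.mem_univ i)
    omega
  exact Finite.of_injective (fun t => (fun i => (⟨t.1 i, this t i⟩ : Fin (c+1))))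
    (by intro a b hab
        apply Subtype.ext; funext i
        exact congrArg Fin.val (congrFun hab i))

lemma geomSumLe (m c : ℕ) : ∑ t ∈ Finset.range (c+1), m ^ t ≤ (m+1) ^ c := by
  induction c with
  | zero => simp
  | succ c ih =>
      rw [Finset.sum_range_succ']
      have h1 : 1 ≤ (m+1)^c := Nat.one_le_pow _ _ (by omega)
      have : ∑ i ∈ Finset.range (c+1), m ^ (i+1) = m * ∑ i ∈ Finset.range (c+1), m ^ i := by
        rw [Finset.mul_sum]; exact Finset.sum_congr rfl (fun i _ => by ring)
      rw [this]
      calc m * ∑ i ∈ Finset.range (c+1), m ^ i + m ^ 0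
          ≤ m * (m+1)^c + 1 := by
            simp only [pow_zero]
            exact Nat.add_le_add_right (Nat.mul_le_mul_left _ ih) 1
        _ ≤ (m+1)^(c+1) := by
            have : (m+1)^(c+1) = m * (m+1)^c + (m+1)^c := by ring
            omega

lemma card_tuple (m c : ℕ) : Nat.card {t : Fin m → ℕ // ∑ i, t i = c} ≤ m ^ c := by
  induction m generalizing c with
  | zero =>
      rcases Nat.eq_zero_or_pos c with rfl | hc
      · simpa using Nat.card_le_card_of_injective (fun t => (0 : Fin 1))
          (fun a b _ => Subtype.ext (Subsingleton.elim _ _))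
      · have : IsEmpty {t : Fin 0 → ℕ // ∑ i, t i = c} := by
          constructor; rintro ⟨t, ht⟩; simp at ht; omega
        rw [Nat.card_of_isEmpty]; exact Nat.zero_le _
  | succ m ih =>
      -- injection into sigma
      have hlt : ∀ t : {t : Fin (m+1) → ℕ // ∑ i, t i = c}, t.1 (Fin.last m) < c + 1 := by
        intro t
        have := Finset.single_le_sum (f := t.1) (fun i _ => Nat.zero_le _)
          (Finset.mem_univ (Fin.last m))
        omega
      have hrest : ∀ t : {t : Fin (m+1) → ℕ // ∑ i, t i = c},
          ∑ j : Fin m, t.1 j.castSucc = c - t.1 (Fin.last m) := by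
        intro t
        have h := t.2
        rw [Fin.sum_univ_castSucc] at h
        omega
      let Φ : {t : Fin (m+1) → ℕ // ∑ i, t i = c} →
          Σ a : Fin (c+1), {t : Fin m → ℕ // ∑ i, t i = c - a.val} :=
        fun t => ⟨⟨t.1 (Fin.last m), hlt t⟩, ⟨fun j => t.1 j.castSucc, hrest t⟩⟩
      have hΦ : Function.Injective Φ := by
        rintro ⟨t, ht⟩ ⟨t', ht'⟩ h
        have h1 : t (Fin.last m) = t' (Fin.last m) := by
          have := congrArg (fun p => (p.1 : Fin (c+1)).val) h
          simpa [Φ] using this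
        have h2' : (fun j : Fin m => t j.castSucc) = fun j => t' j.castSucc := by
          have := congrArg (fun p : (Σ a : Fin (c+1), {t : Fin m → ℕ // ∑ i, t i = c - a.val}) => (p.2 : Fin m → ℕ)) h
          simpa [Φ] using this
        apply Subtype.ext; funext i
        induction i using Fin.lastCases with
        | last => exact h1
        | cast j => exact congrFun h2' j
      calc Nat.card {t : Fin (m+1) → ℕ // ∑ i, t i = c}
          ≤ Nat.card (Σ a : Fin (c+1), {t : Fin m → ℕ // ∑ i, t i = c - a.val}) :=
            Nat.card_le_card_of_injective Φ hΦ
        _ ≤ (m+1) ^ c := by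
            haveI : ∀ a : Fin (c+1), Fintype {t : Fin m → ℕ // ∑ i, t i = c - a.val} :=
              fun a => Fintype.ofFinite _
            rw [Nat.card_eq_fintype_card, Fintype.card_sigma]
            calc ∑ a : Fin (c+1), Fintype.card {t : Fin m → ℕ // ∑ i, t i = c - a.val}
                ≤ ∑ a : Fin (c+1), m ^ (c - a.val) := by
                  apply Finset.sum_le_sum
                  intro a _
                  rw [← Nat.card_eq_fintype_card]
                  exact ih _
              _ = ∑ t ∈ Finset.range (c+1), m ^ (c - t) := by
                  rw [Fin.sum_univ_eq_sum_range (fun t => m ^ (c - t))]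
              _ = ∑ t ∈ Finset.range (c+1), m ^ t := by
                  rw [← Finset.sum_range_reflect]
                  apply Finset.sum_congr rfl
                  intro i hi
                  simp only [Finset.mem_range] at hi
                  congr 1
                  omega
              _ ≤ (m+1) ^ c := geomSumLe m c

instance LsetFinite (m n : ℕ) (c : Fin n → ℕ) : Finite (Lset m n c) := by
  set M := ∑ j : Fin n, (j.val + 1) * c j with hM
  have hbd : ∀ v : Lset m n c, ∀ i, v.1 i < M + 1 := by
    rintro ⟨v, x, hcol, hv⟩ i
    show v i < M + 1
    have : v i ≤ M := by
      rw [hv i]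
      apply Finset.sum_le_sum
      intro j _
      have hxc : x i j ≤ c j := by
        rw [← hcol j]
        exact Finset.single_le_sum (f := fun i' => x i' j) (fun _ _ => Nat.zero_le _)
          (Finset.mem_univ i)
      exact Nat.mul_le_mul_left _ hxc
    omega
  exact Finite.of_injective (fun v => (fun i => (⟨v.1 i, hbd v i⟩ : Fin (M+1))))
    (by intro a b hab
        apply Subtype.ext; funext i
        exact congrArg Fin.val (congrFun hab i))

lemma Lset_zero (m : ℕ) (c : Fin 0 → ℕ) : Lset m 0 c = {fun _ => 0} := by
  ext v
  simp only [Lset, Set.mem_setOf_eq, Set.mem_singleton_iff]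
  constructor
  · rintro ⟨x, -, hv⟩
    funext i; simpa using hv i
  · rintro rfl
    exact ⟨fun _ => Fin.elim0, fun j => j.elim0, fun i => by simp⟩

lemma card_Lset_zero (m : ℕ) (c : Fin 0 → ℕ) : Nat.card (Lset m 0 c) = 1 := by
  rw [Lset_zero]
  simp

lemma card_Lset_succ (m n : ℕ) (c : Fin (n+1) → ℕ) :
    Nat.card (Lset m (n+1) c) ≤
      Nat.card (Lset m n (fun j => c j.castSucc)) * m ^ (c (Fin.last n)) := by
  classical
  -- injection into product
  set T := {t : Fin m → ℕ // ∑ i, t i = c (Fin.last n)} with hT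
  have key : ∀ v : Lset m (n+1) c, ∃ (u : Lset m n (fun j => c j.castSucc)) (t : T),
      ∀ i, v.1 i = u.1 i + (n+1) * t.1 i := by
    rintro ⟨v, x, hcol, hv⟩
    refine ⟨⟨fun i => ∑ j : Fin n, (j.val + 1) * x i j.castSucc,
      ⟨fun i j => x i j.castSucc, fun j => hcol j.castSucc, fun i => rfl⟩⟩,
      ⟨fun i => x i (Fin.last n), hcol (Fin.last n)⟩, ?_⟩
    intro i
    have := hv i
    rw [Fin.sum_univ_castSucc] at this
    simpa using this
  choose U Tf hUT using key
  have hinj : Function.Injective (fun v => (U v, Tf v)) := by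
    intro a b hab
    have h1 : U a = U b := congrArg Prod.fst hab
    have h2 : Tf a = Tf b := congrArg Prod.snd hab
    apply Subtype.ext; funext i
    rw [hUT a i, hUT b i, h1, h2]
  calc Nat.card (Lset m (n+1) c)
      ≤ Nat.card ((Lset m n (fun j => c j.castSucc)) × T) :=
        Nat.card_le_card_of_injective _ hinj
    _ = Nat.card (Lset m n (fun j => c j.castSucc)) * Nat.card T := Nat.card_prod _ _
    _ ≤ Nat.card (Lset m n (fun j => c j.castSucc)) * m ^ (c (Fin.last n)) := by
        exact Nat.mul_le_mul_left _ (card_tuple m (c (Fin.last n)))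

lemma poissonP_nonneg {μ : ℝ} (hμ : 0 ≤ μ) (r : ℕ) : 0 ≤ poissonP μ r := by
  unfold poissonP
  positivity

lemma exp_tsum (x : ℝ) : ∑' n : ℕ, x ^ n / n.factorial = Real.exp x := by
  rw [Real.exp_eq_exp_ℝ, NormedSpace.exp_eq_tsum_div]

lemma tsum_poisson_mul_pow (μ : ℝ) (hμ : 0 ≤ μ) (m : ℕ) :
    ∑' r : ℕ, ENNReal.ofReal (poissonP μ r) * (m : ℝ≥0∞) ^ r
      = ENNReal.ofReal (Real.exp (μ * m) * Real.exp (-μ)) := by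
  have hterm : ∀ r : ℕ, ENNReal.ofReal (poissonP μ r) * (m : ℝ≥0∞) ^ r
      = ENNReal.ofReal (Real.exp (-μ) * ((μ * m) ^ r / r.factorial)) := by
    intro r
    rw [show ((m : ℝ≥0∞)) ^ r = ENNReal.ofReal ((m : ℝ) ^ r) by
        rw [ENNReal.ofReal_pow (by positivity), ENNReal.ofReal_natCast],
      ← ENNReal.ofReal_mul (poissonP_nonneg hμ r)]
    congr 1
    unfold poissonP
    rw [mul_pow]
    ring
  simp_rw [hterm]
  have hsumm : Summable (fun r : ℕ => Real.exp (-μ) * ((μ * m) ^ r / r.factorial)) :=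
    (Real.summable_pow_div_factorial (μ * m)).mul_left _
  rw [← ENNReal.ofReal_tsum_of_nonneg (fun r => by positivity) hsumm]
  congr 1
  rw [tsum_mul_left, exp_tsum, mul_comm]

noncomputable def pexpE (m n : ℕ) : ℝ≥0∞ :=
  ∑' c : Fin n → ℕ,
    (∏ j : Fin n, ENNReal.ofReal (poissonP (1 / ((j : ℕ) + 1 : ℝ)) (c j)))
      * (Nat.card (Lset m n c) : ℝ≥0∞)

lemma pexpE_zero (m : ℕ) : pexpE m 0 = 1 := by
  unfold pexpE
  rw [tsum_eq_single (default : Fin 0 → ℕ) (fun b hb => absurd (Subsingleton.elim b default) hb)]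
  simp [card_Lset_zero, Lset_zero]

lemma pexpE_succ_le (m n : ℕ) :
    pexpE m (n+1) ≤
      ENNReal.ofReal (Real.exp (1 / ((n : ℝ) + 1) * m) * Real.exp (-(1 / ((n : ℝ) + 1))))
        * pexpE m n := by
  have hμ : (0:ℝ) ≤ 1 / ((n : ℝ) + 1) := by positivity
  rw [← tsum_poisson_mul_pow _ hμ m]
  calc pexpE m (n+1)
      ≤ ∑' c : Fin (n+1) → ℕ,
          (∏ j : Fin (n+1), ENNReal.ofReal (poissonP (1 / ((j : ℕ) + 1 : ℝ)) (c j)))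
            * ((Nat.card (Lset m n (fun j => c j.castSucc)) : ℝ≥0∞)
                * (m : ℝ≥0∞) ^ (c (Fin.last n))) := by
        apply ENNReal.tsum_le_tsum
        intro c
        apply mul_le_mul_right
        calc (Nat.card (Lset m (n+1) c) : ℝ≥0∞)
            ≤ ((Nat.card (Lset m n (fun j => c j.castSucc)) * m ^ (c (Fin.last n)) : ℕ) : ℝ≥0∞) :=
              Nat.cast_le.mpr (card_Lset_succ m n c)
          _ = _ := by push_cast; ring
    _ = _ := by
        rw [← Equiv.tsum_eq (Fin.snocEquiv (fun _ : Fin (n+1) => ℕ))]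
        have hpt : ∀ p : ℕ × (Fin n → ℕ),
            (∏ j : Fin (n+1), ENNReal.ofReal
                (poissonP (1 / ((j : ℕ) + 1 : ℝ)) ((Fin.snocEquiv (fun _ => ℕ) p) j)))
              * ((Nat.card (Lset m n (fun j => (Fin.snocEquiv (fun _ => ℕ) p) j.castSucc)) : ℝ≥0∞)
                  * (m : ℝ≥0∞) ^ ((Fin.snocEquiv (fun _ => ℕ) p) (Fin.last n)))
            = (ENNReal.ofReal (poissonP (1 / ((n : ℝ) + 1)) p.1) * (m : ℝ≥0∞) ^ p.1)
              * ((∏ j : Fin n, ENNReal.ofReal (poissonP (1 / ((j : ℕ) + 1 : ℝ)) (p.2 j)))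
                  * (Nat.card (Lset m n p.2) : ℝ≥0∞)) := by
          rintro ⟨a, b⟩
          have he : ∀ j : Fin n, (Fin.snocEquiv (fun _ : Fin (n+1) => ℕ) (a, b)) j.castSucc = b j := by
            intro j; simp [Fin.snocEquiv]
          have hel : (Fin.snocEquiv (fun _ : Fin (n+1) => ℕ) (a, b)) (Fin.last n) = a := by
            simp [Fin.snocEquiv]
          have hfun : (fun j : Fin n => (Fin.snocEquiv (fun _ : Fin (n+1) => ℕ) (a, b)) j.castSucc) = b := by
            funext j; exact he j
          rw [Fin.prod_univ_castSucc]
          simp only [he, hel, hfun, Fin.coe_castSucc, Fin.val_last]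
          ring
        simp_rw [hpt]
        rw [ENNReal.tsum_prod']
        simp_rw [ENNReal.tsum_mul_left, ENNReal.tsum_mul_right]
        rfl

lemma pexpE_chain (m : ℕ) (k k' : ℕ) (hkk' : k ≤ k') :
    pexpE m k' ≤ ENNReal.ofReal
        (Real.exp (((m : ℝ) - 1) * ∑ j ∈ Finset.Ico k k', 1 / ((j : ℝ) + 1)))
      * pexpE m k := by
  induction k', hkk' using Nat.le_induction with
  | base => simp
  | succ n hkn ih =>
      calc pexpE m (n+1)
          ≤ ENNReal.ofReal (Real.exp (1 / ((n : ℝ) + 1) * m) * Real.exp (-(1 / ((n : ℝ) + 1))))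
              * pexpE m n := pexpE_succ_le m n
        _ ≤ ENNReal.ofReal (Real.exp (1 / ((n : ℝ) + 1) * m) * Real.exp (-(1 / ((n : ℝ) + 1))))
              * (ENNReal.ofReal
                  (Real.exp (((m : ℝ) - 1) * ∑ j ∈ Finset.Ico k n, 1 / ((j : ℝ) + 1)))
                * pexpE m k) := mul_le_mul_right ih _
        _ = _ := by
            rw [← mul_assoc, ← ENNReal.ofReal_mul (by positivity)]
            congr 2
            rw [← Real.exp_add, ← Real.exp_add, Finset.sum_Ico_succ_top hkn]
            congr 1
            ring

lemma pexpE_ne_top (m n : ℕ) : pexpE m n ≠ ⊤ := by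
  have h := pexpE_chain m 0 n (Nat.zero_le n)
  rw [pexpE_zero, mul_one] at h
  exact ne_top_of_le_ne_top ENNReal.ofReal_ne_top h

lemma harmonic_le (k k' : ℕ) (hk : 1 ≤ k) (hkk' : k ≤ k') :
    ∑ j ∈ Finset.Ico k k', 1 / ((j : ℝ) + 1) ≤ Real.log k' - Real.log k := by
  induction k', hkk' using Nat.le_induction with
  | base => simp
  | succ n hkn ih =>
      rw [Finset.sum_Ico_succ_top hkn]
      have hn : (0:ℝ) < n := by
        have : 1 ≤ n := le_trans hk hkn
        exact_mod_cast this
      have hstep : 1 / ((n : ℝ) + 1) ≤ Real.log (n+1) - Real.log n := by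
        have hx : (0:ℝ) < (n : ℝ) / ((n : ℝ) + 1) := by positivity
        have := Real.log_le_sub_one_of_pos hx
        rw [Real.log_div (ne_of_gt hn) (by positivity)] at this
        have h2 : (n : ℝ) / ((n : ℝ) + 1) - 1 = -(1 / ((n : ℝ) + 1)) := by
          field_simp
          ring
        rw [h2] at this
        linarith
      have hc : Real.log ((n:ℝ) + 1) = Real.log ((n + 1 : ℕ) : ℝ) := by norm_cast
      linarith

lemma pexp_eq_toReal (m n : ℕ) :
    pexp n (fun c => (Nat.card (Lset m n c) : ℝ)) = (pexpE m n).toReal := by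
  unfold pexp pexpE
  rw [ENNReal.tsum_toReal_eq (fun c => by
    exact ENNReal.mul_ne_top (by
      apply ENNReal.prod_ne_top ; intro j _; exact ENNReal.ofReal_ne_top) (ENNReal.natCast_ne_top _))]
  apply tsum_congr
  intro c
  rw [ENNReal.toReal_mul, ENNReal.toReal_prod]
  have h2 : ((Nat.card (Lset m n c) : ℝ≥0∞)).toReal = (Nat.card (Lset m n c) : ℝ) := by simp
  rw [h2]
  congr 1
  exact Finset.prod_congr rfl
    (fun j _ => (ENNReal.toReal_ofReal
      (poissonP_nonneg (μ := 1 / ((j : ℕ) + 1 : ℝ)) (by positivity) _)).symm)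

theorem stmt_9 (m k k' : ℕ) (hm : 1 ≤ m) (hk : 1 ≤ k) (hkk' : k ≤ k') :
    pexp k' (fun c => (Nat.card (Lset m k' c) : ℝ)) ≤
      ((k' : ℝ) / k) ^ (m - 1) * pexp k (fun c => (Nat.card (Lset m k c) : ℝ)) := by
  have hk0 : (0:ℝ) < k := by exact_mod_cast hk
  have hk'0 : (0:ℝ) < k' := by exact_mod_cast lt_of_lt_of_le hk hkk'
  have hm1 : (0:ℝ) ≤ (m : ℝ) - 1 := by
    have : (1:ℝ) ≤ m := by exact_mod_cast hm
    linarith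
  rw [pexp_eq_toReal, pexp_eq_toReal]
  have hexp : Real.exp (((m : ℝ) - 1) * ∑ j ∈ Finset.Ico k k', 1 / ((j : ℝ) + 1))
      ≤ ((k' : ℝ) / k) ^ (m - 1) := by
    calc Real.exp (((m : ℝ) - 1) * ∑ j ∈ Finset.Ico k k', 1 / ((j : ℝ) + 1))
        ≤ Real.exp (((m : ℝ) - 1) * (Real.log k' - Real.log k)) := by
          apply Real.exp_le_exp.mpr
          exact mul_le_mul_of_nonneg_left (harmonic_le k k' hk hkk') hm1
      _ = ((k' : ℝ) / k) ^ (m - 1) := by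
          rw [← Real.log_div (ne_of_gt hk'0) (ne_of_gt hk0)]
          have hdiv : (0:ℝ) < (k' : ℝ) / k := by positivity
          rw [mul_comm, ← Real.rpow_def_of_pos hdiv]
          have : ((m : ℝ) - 1) = ((m - 1 : ℕ) : ℝ) := by
            have : (1:ℕ) ≤ m := hm
            push_cast [Nat.cast_sub this]
            ring
          rw [this, Real.rpow_natCast]
  calc (pexpE m k').toReal
      ≤ (ENNReal.ofReal
            (Real.exp (((m : ℝ) - 1) * ∑ j ∈ Finset.Ico k k', 1 / ((j : ℝ) + 1)))
          * pexpE m k).toReal := by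
        apply ENNReal.toReal_mono
        · exact ENNReal.mul_ne_top ENNReal.ofReal_ne_top (pexpE_ne_top m k)
        · exact pexpE_chain m k k' hkk'
    _ = Real.exp (((m : ℝ) - 1) * ∑ j ∈ Finset.Ico k k', 1 / ((j : ℝ) + 1))
          * (pexpE m k).toReal := by
        rw [ENNReal.toReal_mul, ENNReal.toReal_ofReal (Real.exp_nonneg _)]
    _ ≤ ((k' : ℝ) / k) ^ (m - 1) * (pexpE m k).toReal :=
        mul_le_mul_of_nonneg_right hexp ENNReal.toReal_nonneg
end
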